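/- Fix an integer d' ≥ 1, α ∈ (0, 1/2) and β ∈ (1−α, 2α). Let Z : [0,1] → ℝ^{d'} and let A = (A_{i,j}) satisfy Chen's relation, and suppose ‖Z‖_α < ∞ and Γ_R < ∞. Then ‖A‖_{2α} ≤ Γ_R · 2/(1 − 2^{−2α}) + ‖Z‖_α² · 2^{1−α}/(1 − 2^{−α}). -/

import Mathlib

open Finset

/-- Dyadic rationals in `[0,1]`: points of the form `k / 2^n` with `0 ≤ k ≤ 2^n`. -/
def IsDyadic (x : ℝ) : Prop := ∃ n k : ℕ, k ≤ 2 ^ n ∧ x = (k : ℝ) / 2 ^ n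

/-- least multiple of `2^j` that is `≥ k`, built recursively. -/
def uSeq (k : ℕ) : ℕ → ℕ
  | 0 => k
  | j+1 => if 2^(j+1) ∣ uSeq k j then uSeq k j else uSeq k j + 2^j

/-- greatest multiple of `2^j` that is `≤ l`, built recursively. -/
def vSeq (l : ℕ) : ℕ → ℕ
  | 0 => l
  | j+1 => if 2^(j+1) ∣ vSeq l j then vSeq l j else vSeq l j - 2^j

lemma uSeq_dvd (k j : ℕ) : 2^j ∣ uSeq k j := by
  induction j with
  | zero => simp [uSeq]
  | succ j ih =>
    rw [uSeq]
    split
    · assumption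
    · rename_i h
      obtain ⟨c, hc⟩ := ih
      rcases Nat.even_or_odd c with he | ho
      · obtain ⟨m, hm⟩ := he
        exact absurd ⟨m, by rw [hc, hm]; ring⟩ h
      · obtain ⟨m, hm⟩ := ho
        exact ⟨m + 1, by rw [hc, hm]; ring⟩

lemma vSeq_dvd (l j : ℕ) : 2^j ∣ vSeq l j := by
  induction j with
  | zero => simp [vSeq]
  | succ j ih =>
    rw [vSeq]
    split
    · assumption
    · rename_i h
      obtain ⟨c, hc⟩ := ih
      rcases Nat.even_or_odd c with he | ho
      · obtain ⟨m, hm⟩ := he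
        exact absurd ⟨m, by rw [hc, hm]; ring⟩ h
      · obtain ⟨m, hm⟩ := ho
        refine ⟨m, ?_⟩
        rw [hc, hm]
        have : 2 ^ j * (2 * m + 1) = 2^(j+1)*m + 2^j := by ring
        omega

lemma vSeq_pow_le (l j : ℕ) (h : ¬ 2^(j+1) ∣ vSeq l j) : 2^j ≤ vSeq l j := by
  obtain ⟨c, hc⟩ := vSeq_dvd l j
  rcases Nat.eq_zero_or_pos c with h0 | h1
  · exfalso; apply h; rw [hc, h0]; simp
  · calc 2^j = 2^j * 1 := by ring
    _ ≤ 2^j * c := Nat.mul_le_mul_left _ h1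
    _ = vSeq l j := hc.symm

lemma uSeq_step (k j : ℕ) :
    uSeq k (j+1) = uSeq k j ∨ uSeq k (j+1) = uSeq k j + 2^j := by
  rw [uSeq]; split
  · exact Or.inl rfl
  · exact Or.inr rfl

lemma vSeq_step (l j : ℕ) :
    vSeq l (j+1) = vSeq l j ∨ vSeq l j = vSeq l (j+1) + 2^j := by
  rw [vSeq]; split
  · exact Or.inl rfl
  · rename_i h
    exact Or.inr (by have := vSeq_pow_le l j h; omega)

lemma uSeq_ge (k j : ℕ) : k ≤ uSeq k j := by
  induction j with
  | zero => simp [uSeq]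
  | succ j ih =>
    have hp : 0 < 2^j := pow_pos (by norm_num) j
    rcases uSeq_step k j with h | h <;> omega

lemma uSeq_lt (k j : ℕ) : uSeq k j < k + 2^j := by
  induction j with
  | zero => simp [uSeq]
  | succ j ih =>
    have : (2:ℕ)^(j+1) = 2^j + 2^j := by ring
    have hp : 0 < 2^j := pow_pos (by norm_num) j
    rcases uSeq_step k j with h | h <;> omega

lemma vSeq_le (l j : ℕ) : vSeq l j ≤ l := by
  induction j with
  | zero => simp [vSeq]
  | succ j ih =>
    have hp : 0 < 2^j := pow_pos (by norm_num) j
    rcases vSeq_step l j with h | h <;> omega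

lemma vSeq_gt (l j : ℕ) : l < vSeq l j + 2^j := by
  induction j with
  | zero => simp [vSeq]
  | succ j ih =>
    have : (2:ℕ)^(j+1) = 2^j + 2^j := by ring
    have hp : 0 < 2^j := pow_pos (by norm_num) j
    rcases vSeq_step l j with h | h <;> omega

lemma uSeq_le_vSeq (k l j : ℕ) (h : k + 2^j ≤ l) : uSeq k j ≤ vSeq l j := by
  by_contra hlt
  push_neg at hlt
  have hd : 2^j ∣ (uSeq k j - vSeq l j) := Nat.dvd_sub (uSeq_dvd k j) (vSeq_dvd l j)
  have h1 : 2^j ≤ uSeq k j - vSeq l j := Nat.le_of_dvd (by omega) hd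
  have hp : 0 < 2^j := pow_pos (by norm_num) j
  have h2 := uSeq_lt k j
  have h3 := vSeq_gt l j
  omega

lemma abs_five (a b c x y : ℝ) : |a + (b + c + y) + x| ≤ |a| + |b| + |c| + |y| + |x| := by
  calc |a + (b + c + y) + x| ≤ |a + (b + c + y)| + |x| := abs_add_le _ _
    _ ≤ |a| + |b + c + y| + |x| := by linarith [abs_add_le a (b + c + y)]
    _ ≤ |a| + (|b + c| + |y|) + |x| := by linarith [abs_add_le (b + c) y]
    _ ≤ |a| + (|b| + |c| + |y|) + |x| := by linarith [abs_add_le b c]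
    _ = |a| + |b| + |c| + |y| + |x| := by ring

set_option maxHeartbeats 2000000 in
/-- **Lemma (bound on `‖A‖_{2α}` in terms of `Γ_R` and `‖Z‖_α`).**
Fix `d' ≥ 1`, `α ∈ (0,1/2)` and `β ∈ (1−α,2α)`. If `A` satisfies Chen's relation with
respect to `Z` and `‖Z‖_α ≤ K_Z < ∞`, `Γ_R ≤ K_R < ∞`, then
`‖A‖_{2α} ≤ K_R·2/(1−2^{−2α}) + K_Z²·2^{1−α}/(1−2^{−α})`, i.e. for all levels `n` and
grid indices `k < l ≤ 2ⁿ` and all `i, j`,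
`|A_{i,j}(t_kⁿ, t_lⁿ)| ≤ (K_R·2/(1−2^{−2α}) + K_Z²·2^{1−α}/(1−2^{−α}))·(t_lⁿ−t_kⁿ)^{2α}`. -/
theorem A_2alpha_bound
    (d' : ℕ) (hd' : 1 ≤ d')
    (α β : ℝ) (hα1 : 0 < α) (hα2 : α < 1 / 2)
    (hβ1 : 1 - α < β) (hβ2 : β < 2 * α)
    (Z : ℝ → Fin d' → ℝ)
    (A : Fin d' → Fin d' → ℝ → ℝ → ℝ)
    -- Chen's relation
    (hChen : ∀ (i j : Fin d') (r s t : ℝ), IsDyadic r → IsDyadic s → IsDyadic t →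
      r ≤ s → s ≤ t →
      A i j r t = A i j r s + A i j s t + (Z s i - Z r i) * (Z t j - Z s j))
    (KZ KR : ℝ)
    -- `‖Z‖_α ≤ K_Z` (finiteness of `‖Z‖_α`)
    (hZ : ∀ n k l : ℕ, k < l → l ≤ 2 ^ n →
      ‖Z ((l : ℝ) / 2 ^ n) - Z ((k : ℝ) / 2 ^ n)‖ ≤ KZ * (((l : ℝ) - k) / 2 ^ n) ^ α)
    -- `Γ_R ≤ K_R` (finiteness of `Γ_R`)
    (hR : ∀ (i j : Fin d') (n l m : ℕ), l < m → m ≤ 2 ^ n →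
      |∑ k ∈ Finset.Ico l m, A i j ((k : ℝ) / 2 ^ n) (((k : ℝ) + 1) / 2 ^ n)| ≤
        KR * (((m : ℝ) - l) / 2 ^ n) ^ β * (((2 : ℝ) ^ n)⁻¹) ^ (2 * α - β)) :
    ∀ (i j : Fin d') (n k l : ℕ), k < l → l ≤ 2 ^ n →
      |A i j ((k : ℝ) / 2 ^ n) ((l : ℝ) / 2 ^ n)| ≤
        (KR * 2 / (1 - (2 : ℝ) ^ (-(2 * α))) +
          KZ ^ 2 * (2 : ℝ) ^ (1 - α) / (1 - (2 : ℝ) ^ (-α))) *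
        (((l : ℝ) - k) / 2 ^ n) ^ (2 * α) := by
  -- nonnegativity of the constants
  have hKR : 0 ≤ KR := by
    by_contra hneg
    push_neg at hneg
    have h := hR ⟨0, hd'⟩ ⟨0, hd'⟩ 1 0 1 one_pos (by norm_num)
    have h0 := abs_nonneg (∑ k ∈ Finset.Ico (0:ℕ) 1,
      A ⟨0, hd'⟩ ⟨0, hd'⟩ ((k : ℝ) / 2 ^ 1) (((k : ℝ) + 1) / 2 ^ 1))
    have hp1 : (0:ℝ) < ((((1:ℕ)):ℝ) - ((0:ℕ):ℝ)) / 2 ^ (1:ℕ) := by norm_num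
    have hp2 : (0:ℝ) < (((2:ℝ) ^ (1:ℕ))⁻¹) := by norm_num
    have hb1 := Real.rpow_pos_of_pos hp1 β
    have hb2 := Real.rpow_pos_of_pos hp2 (2*α - β)
    have hlt : KR * (((((1:ℕ)):ℝ) - ((0:ℕ):ℝ)) / 2 ^ (1:ℕ)) ^ β * (((2:ℝ) ^ (1:ℕ))⁻¹) ^ (2*α - β) < 0 :=
      mul_neg_of_neg_of_pos (mul_neg_of_neg_of_pos hneg hb1) hb2
    linarith
  have hKZ : 0 ≤ KZ := by
    by_contra hneg
    push_neg at hneg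
    have h := hZ 1 0 1 one_pos (by norm_num)
    have h0 := norm_nonneg (Z (((1:ℕ):ℝ) / 2 ^ (1:ℕ)) - Z (((0:ℕ):ℝ) / 2 ^ (1:ℕ)))
    have hp1 : (0:ℝ) < ((((1:ℕ)):ℝ) - ((0:ℕ):ℝ)) / 2 ^ (1:ℕ) := by norm_num
    have hb1 := Real.rpow_pos_of_pos hp1 α
    have hlt : KZ * (((((1:ℕ)):ℝ) - ((0:ℕ):ℝ)) / 2 ^ (1:ℕ)) ^ α < 0 :=
      mul_neg_of_neg_of_pos hneg hb1
    linarith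
  -- diagonal of A vanishes
  have hA0 : ∀ (i j : Fin d') (p a : ℕ), a ≤ 2^p → A i j ((a:ℝ)/2^p) ((a:ℝ)/2^p) = 0 := by
    intro i j p a ha
    have hdy : IsDyadic ((a:ℝ)/2^p) := ⟨p, a, ha, rfl⟩
    have h := hChen i j _ _ _ hdy hdy hdy le_rfl le_rfl
    simp at h
    linarith
  -- single-increment bound for A at any level
  have hA1 : ∀ (i j : Fin d') (p a : ℕ), a < 2^p →
      |A i j ((a:ℝ)/2^p) (((a:ℝ)+1)/2^p)| ≤ KR * (((2:ℝ)^p)⁻¹)^(2*α) := by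
    intro i j p a ha
    have h := hR i j p a (a+1) (Nat.lt_succ_self a) ha
    rw [show Finset.Ico a (a+1) = {a} by simp, Finset.sum_singleton] at h
    push_cast at h
    have e1 : (((a:ℝ)+1) - a) / 2^p = ((2:ℝ)^p)⁻¹ := by ring
    rw [e1, mul_assoc, ← Real.rpow_add (by positivity), show β + (2*α - β) = 2*α by ring] at h
    exact h
  -- componentwise Hölder bound for Z
  have hZc : ∀ (i : Fin d') (p a b : ℕ), a ≤ b → b ≤ 2^p →
      |Z ((b:ℝ)/2^p) i - Z ((a:ℝ)/2^p) i| ≤ KZ * (((b:ℝ)-(a:ℝ))/2^p)^α := by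
    intro i p a b hab hb
    rcases eq_or_lt_of_le hab with rfl | hlt
    · simp [Real.zero_rpow (ne_of_gt hα1)]
    · have h := hZ p a b hlt hb
      calc |Z ((b:ℝ)/2^p) i - Z ((a:ℝ)/2^p) i|
          = ‖(Z ((b:ℝ)/2^p) - Z ((a:ℝ)/2^p)) i‖ := by
            rw [Real.norm_eq_abs]; simp
        _ ≤ ‖Z ((b:ℝ)/2^p) - Z ((a:ℝ)/2^p)‖ := norm_le_pi_norm _ i
        _ ≤ KZ * (((b:ℝ)-(a:ℝ))/2^p)^α := h
  intro i j n k l hkl hln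
  -- piece bound: A over a single interval of a coarser dyadic grid
  have hPiece : ∀ (p a : ℕ), p ≤ n → 2^p ∣ a → a + 2^p ≤ 2^n →
      |A i j ((a:ℝ)/2^n) (((a + 2^p : ℕ):ℝ)/2^n)| ≤ KR * ((2:ℝ)^p/2^n)^(2*α) := by
    intro p a hpn hdvd hle
    obtain ⟨c, hc⟩ := hdvd
    have hsplitn : (2:ℕ)^n = 2^p * 2^(n-p) := by rw [← pow_add]; congr 1; omega
    have hsplit : (2:ℝ)^n = 2^p * 2^(n-p) := by
      rw [← pow_add]; congr 1; omega
    have hpz : 0 < (2:ℕ)^p := pow_pos (by norm_num) p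
    have hc2 : c < 2^(n-p) := by
      have h1 : 2^p * (c+1) ≤ 2^p * 2^(n-p) := by
        calc 2^p * (c+1) = a + 2^p := by rw [hc]; ring
          _ ≤ 2^n := hle
          _ = 2^p * 2^(n-p) := hsplitn
      have := Nat.le_of_mul_le_mul_left h1 hpz
      omega
    have h := hA1 i j (n-p) c hc2
    have hpne : ((2:ℝ)^p) ≠ 0 := by positivity
    have hnpne : ((2:ℝ)^(n-p)) ≠ 0 := by positivity
    have e1 : ((c:ℝ))/2^(n-p) = (a:ℝ)/2^n := by
      rw [hsplit, hc]; push_cast; field_simp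
    have e2 : ((c:ℝ)+1)/2^(n-p) = ((a + 2^p : ℕ):ℝ)/2^n := by
      rw [hsplit]; push_cast [hc]; field_simp
    have e3 : ((2:ℝ)^(n-p))⁻¹ = 2^p/2^n := by
      rw [hsplit]; field_simp
    rw [e1, e2, e3] at h
    exact h
  have h2n : (0:ℝ) < 2^n := by positivity
  set J := Nat.log 2 (l - k) with hJdef
  have hJ1 : 2^J ≤ l - k := Nat.pow_log_le_self 2 (by omega)
  have hJ2 : l - k < 2^(J+1) := Nat.lt_pow_succ_log_self (by norm_num) _
  have hJn : J ≤ n := by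
    have h1 : (2:ℕ)^J ≤ 2^n := le_trans hJ1 (by omega)
    exact (Nat.pow_le_pow_iff_right (by norm_num)).mp h1
  have hdy : ∀ a : ℕ, a ≤ 2^n → IsDyadic ((a:ℝ)/2^n) := fun a ha => ⟨n, a, ha, rfl⟩
  have hdiv : ∀ a b : ℕ, a ≤ b → ((a:ℝ)/2^n) ≤ ((b:ℝ)/2^n) := fun a b hab =>
    (div_le_div_iff_of_pos_right h2n).mpr (by exact_mod_cast hab)
  have hklR : (k:ℝ) < (l:ℝ) := by exact_mod_cast hkl
  have hδnn : (0:ℝ) ≤ ((l:ℝ)-(k:ℝ))/2^n := by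
    apply div_nonneg (by linarith) (le_of_lt h2n)
  -- main dyadic-refinement induction
  have key : ∀ m : ℕ, m ≤ J →
      |A i j ((k:ℝ)/2^n) ((l:ℝ)/2^n)| ≤
        |A i j ((uSeq k m : ℝ)/2^n) ((vSeq l m : ℝ)/2^n)| +
        ∑ q ∈ Finset.range m, (2*KR*((2:ℝ)^q/2^n)^(2*α)
          + 2*KZ^2*(((l:ℝ)-(k:ℝ))/2^n)^α*((2:ℝ)^q/2^n)^α) := by
    intro m
    induction m with
    | zero => intro _; simp [uSeq, vSeq]
    | succ m ih =>
      intro hm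
      have ihm := ih (by omega)
      have hpow : (2:ℕ)^(m+1) ≤ 2^J := Nat.pow_le_pow_right (by norm_num) hm
      have hpowJ : (2:ℕ)^J ≤ l - k := hJ1
      have h2m : 2^m + 2^m ≤ l - k := by
        have he : (2:ℕ)^(m+1) = 2^m + 2^m := by ring
        omega
      have hp2m : 0 < (2:ℕ)^m := pow_pos (by norm_num) m
      have hp2J : 0 < (2:ℕ)^J := pow_pos (by norm_num) J
      have hu : k ≤ uSeq k m := uSeq_ge k m
      have hu2 : k ≤ uSeq k (m+1) := uSeq_ge k (m+1)
      have hv : vSeq l m ≤ l := vSeq_le l m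
      have hv2 : vSeq l (m+1) ≤ l := vSeq_le l (m+1)
      have huv' : uSeq k (m+1) ≤ vSeq l (m+1) := uSeq_le_vSeq k l (m+1) (by
        have he : (2:ℕ)^(m+1) = 2^m + 2^m := by ring
        omega)
      have hustep : uSeq k m ≤ uSeq k (m+1) ∧ uSeq k (m+1) ≤ uSeq k m + 2^m := by
        rcases uSeq_step k m with h | h <;> omega
      have hvstep : vSeq l (m+1) ≤ vSeq l m ∧ vSeq l m ≤ vSeq l (m+1) + 2^m := by
        rcases vSeq_step l m with h | h <;> omega
      have hb : vSeq l m ≤ 2^n := le_trans hv hln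
      -- bounds on the two A-pieces
      have hB1 : |A i j ((uSeq k m : ℝ)/2^n) ((uSeq k (m+1) : ℝ)/2^n)| ≤
          KR * ((2:ℝ)^m/2^n)^(2*α) := by
        rcases uSeq_step k m with h | h
        · rw [h, hA0 i j n (uSeq k m) (by omega), abs_zero]
          exact mul_nonneg hKR (Real.rpow_nonneg (by positivity) _)
        · rw [h]
          exact hPiece m (uSeq k m) (by omega) (uSeq_dvd k m) (by omega)
      have hB2 : |A i j ((vSeq l (m+1) : ℝ)/2^n) ((vSeq l m : ℝ)/2^n)| ≤
          KR * ((2:ℝ)^m/2^n)^(2*α) := by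
        rcases vSeq_step l m with h | h
        · rw [h, hA0 i j n (vSeq l m) hb, abs_zero]
          exact mul_nonneg hKR (Real.rpow_nonneg (by positivity) _)
        · rw [h]
          exact hPiece m (vSeq l (m+1)) (by omega)
            (dvd_trans (pow_dvd_pow 2 (Nat.le_succ m)) (vSeq_dvd l (m+1))) (by omega)
      -- bounds on the two cross terms
      have hX1 : |(Z ((uSeq k (m+1):ℝ)/2^n) i - Z ((uSeq k m:ℝ)/2^n) i) *
          (Z ((vSeq l m:ℝ)/2^n) j - Z ((uSeq k (m+1):ℝ)/2^n) j)| ≤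
          KZ^2 * (((l:ℝ)-(k:ℝ))/2^n)^α * ((2:ℝ)^m/2^n)^α := by
        rw [abs_mul]
        have h1 := hZc i n (uSeq k m) (uSeq k (m+1)) hustep.1 (by omega)
        have h2 := hZc j n (uSeq k (m+1)) (vSeq l m) (by omega) hb
        have m1 : (((uSeq k (m+1):ℝ) - (uSeq k m:ℝ))/2^n)^α ≤ ((2:ℝ)^m/2^n)^α := by
          apply Real.rpow_le_rpow _ _ (le_of_lt hα1)
          · apply div_nonneg _ (le_of_lt h2n)
            have hcc : (uSeq k m :ℝ) ≤ uSeq k (m+1) := by exact_mod_cast hustep.1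
            linarith
          · apply (div_le_div_iff_of_pos_right h2n).mpr
            have hcc : (uSeq k (m+1):ℝ) ≤ ((uSeq k m + 2^m : ℕ):ℝ) := by
              exact_mod_cast hustep.2
            push_cast at hcc
            linarith
        have m2 : (((vSeq l m:ℝ) - (uSeq k (m+1):ℝ))/2^n)^α ≤
            (((l:ℝ)-(k:ℝ))/2^n)^α := by
          apply Real.rpow_le_rpow _ _ (le_of_lt hα1)
          · apply div_nonneg _ (le_of_lt h2n)
            have hcc : (uSeq k (m+1):ℝ) ≤ (vSeq l m : ℝ) := by
              exact_mod_cast (le_trans huv' hvstep.1)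
            linarith
          · apply (div_le_div_iff_of_pos_right h2n).mpr
            have c1 : (vSeq l m : ℝ) ≤ (l:ℝ) := by exact_mod_cast hv
            have c2 : (k:ℝ) ≤ (uSeq k (m+1):ℝ) := by exact_mod_cast hu2
            linarith
        refine le_trans (mul_le_mul (h1.trans (mul_le_mul_of_nonneg_left m1 hKZ))
          (h2.trans (mul_le_mul_of_nonneg_left m2 hKZ)) (abs_nonneg _)
          (mul_nonneg hKZ (Real.rpow_nonneg (by positivity) _))) (le_of_eq (by ring))
      have hX2 : |(Z ((vSeq l (m+1):ℝ)/2^n) i - Z ((uSeq k (m+1):ℝ)/2^n) i) *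
          (Z ((vSeq l m:ℝ)/2^n) j - Z ((vSeq l (m+1):ℝ)/2^n) j)| ≤
          KZ^2 * (((l:ℝ)-(k:ℝ))/2^n)^α * ((2:ℝ)^m/2^n)^α := by
        rw [abs_mul]
        have h1 := hZc i n (uSeq k (m+1)) (vSeq l (m+1)) huv' (by omega)
        have h2 := hZc j n (vSeq l (m+1)) (vSeq l m) hvstep.1 hb
        have m1 : (((vSeq l (m+1):ℝ) - (uSeq k (m+1):ℝ))/2^n)^α ≤
            (((l:ℝ)-(k:ℝ))/2^n)^α := by
          apply Real.rpow_le_rpow _ _ (le_of_lt hα1)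
          · apply div_nonneg _ (le_of_lt h2n)
            have hcc : (uSeq k (m+1):ℝ) ≤ (vSeq l (m+1) : ℝ) := by exact_mod_cast huv'
            linarith
          · apply (div_le_div_iff_of_pos_right h2n).mpr
            have c1 : (vSeq l (m+1) : ℝ) ≤ (l:ℝ) := by exact_mod_cast hv2
            have c2 : (k:ℝ) ≤ (uSeq k (m+1):ℝ) := by exact_mod_cast hu2
            linarith
        have m2 : (((vSeq l m:ℝ) - (vSeq l (m+1):ℝ))/2^n)^α ≤ ((2:ℝ)^m/2^n)^α := by
          apply Real.rpow_le_rpow _ _ (le_of_lt hα1)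
          · apply div_nonneg _ (le_of_lt h2n)
            have hcc : (vSeq l (m+1) :ℝ) ≤ vSeq l m := by exact_mod_cast hvstep.1
            linarith
          · apply (div_le_div_iff_of_pos_right h2n).mpr
            have hcc : (vSeq l m:ℝ) ≤ ((vSeq l (m+1) + 2^m : ℕ):ℝ) := by
              exact_mod_cast hvstep.2
            push_cast at hcc
            linarith
        refine le_trans (mul_le_mul (h1.trans (mul_le_mul_of_nonneg_left m1 hKZ))
          (h2.trans (mul_le_mul_of_nonneg_left m2 hKZ)) (abs_nonneg _)
          (mul_nonneg hKZ (Real.rpow_nonneg hδnn _))) (le_of_eq (by ring))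
      -- Chen's relation, applied twice
      have hC1 := hChen i j ((uSeq k m:ℝ)/2^n) ((uSeq k (m+1):ℝ)/2^n) ((vSeq l m:ℝ)/2^n)
        (hdy _ (by omega)) (hdy _ (by omega)) (hdy _ hb)
        (hdiv _ _ hustep.1) (hdiv _ _ (by omega))
      have hC2 := hChen i j ((uSeq k (m+1):ℝ)/2^n) ((vSeq l (m+1):ℝ)/2^n) ((vSeq l m:ℝ)/2^n)
        (hdy _ (by omega)) (hdy _ (by omega)) (hdy _ hb)
        (hdiv _ _ huv') (hdiv _ _ hvstep.1)
      have hstep : |A i j ((uSeq k m:ℝ)/2^n) ((vSeq l m:ℝ)/2^n)| ≤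
          |A i j ((uSeq k (m+1):ℝ)/2^n) ((vSeq l (m+1):ℝ)/2^n)| +
          (2*KR*((2:ℝ)^m/2^n)^(2*α)
            + 2*KZ^2*(((l:ℝ)-(k:ℝ))/2^n)^α*((2:ℝ)^m/2^n)^α) := by
        rw [hC1, hC2]
        refine le_trans (abs_five _ _ _ _ _) ?_
        linarith [hB1, hB2, hX1, hX2]
      refine le_trans ihm ?_
      rw [Finset.sum_range_succ]
      linarith [hstep]
  -- bound on the final middle piece
  have huJv : uSeq k J ≤ vSeq l J := uSeq_le_vSeq k l J (by omega)
  have hvJ2n : vSeq l J ≤ 2^n := le_trans (vSeq_le l J) hln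
  have hp2J : 0 < (2:ℕ)^J := pow_pos (by norm_num) J
  have hBJ : |A i j ((uSeq k J:ℝ)/2^n) ((vSeq l J:ℝ)/2^n)| ≤
      KR * ((2:ℝ)^J/2^n)^(2*α) := by
    obtain ⟨c, hc⟩ : 2^J ∣ (vSeq l J - uSeq k J) :=
      Nat.dvd_sub (vSeq_dvd l J) (uSeq_dvd k J)
    have h2 := uSeq_ge k J
    have h3 := vSeq_le l J
    have hslt : vSeq l J - uSeq k J < 2^(J+1) := by omega
    have hc2 : c < 2 := by
      by_contra hcc
      push_neg at hcc
      have h4 : 2^J * 2 ≤ 2^J * c := Nat.mul_le_mul_left _ hcc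
      have hpj : (2:ℕ)^(J+1) = 2^J * 2 := by ring
      omega
    interval_cases c
    · have he : vSeq l J = uSeq k J := by omega
      rw [he, hA0 i j n (uSeq k J) (by omega), abs_zero]
      exact mul_nonneg hKR (Real.rpow_nonneg (by positivity) _)
    · have he : vSeq l J = uSeq k J + 2^J := by omega
      rw [he]
      exact hPiece J (uSeq k J) hJn (uSeq_dvd k J) (by omega)
  -- geometric sums
  have geom : ∀ c : ℝ, 0 < c → ∑ q ∈ Finset.range J, ((2:ℝ)^q/2^n)^c ≤
      ((2:ℝ)^J/2^n)^c * ((2:ℝ)^(-c)/(1 - (2:ℝ)^(-c))) := by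
    intro c hc
    have h2c : (1:ℝ) < (2:ℝ)^c :=
      (Real.one_lt_rpow_iff_of_pos two_pos).mpr (Or.inl ⟨one_lt_two, hc⟩)
    have hterm : ∀ q : ℕ, ((2:ℝ)^q/2^n)^c = ((2:ℝ)^c)^q * (((2:ℝ)^n)⁻¹)^c := by
      intro q
      rw [div_eq_mul_inv, Real.mul_rpow (by positivity) (by positivity)]
      congr 1
      rw [← Real.rpow_natCast 2 q, ← Real.rpow_natCast ((2:ℝ)^c) q,
        ← Real.rpow_mul (by norm_num), ← Real.rpow_mul (by norm_num)]
      ring_nf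
    simp_rw [hterm]
    rw [← Finset.sum_mul, geom_sum_eq (ne_of_gt h2c) J]
    have hne : (2:ℝ)^c ≠ 0 := ne_of_gt (lt_trans one_pos h2c)
    have hne1 : (2:ℝ)^c - 1 ≠ 0 := ne_of_gt (by linarith)
    have e2 : (2:ℝ)^(-c)/(1 - (2:ℝ)^(-c)) = 1/((2:ℝ)^c - 1) := by
      rw [Real.rpow_neg (by norm_num)]
      rw [div_eq_div_iff (by
        have hlt : ((2:ℝ)^c)⁻¹ < 1 := by
          rw [inv_lt_one_iff₀]; right; exact h2c
        linarith) (by linarith)]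
      field_simp
    rw [e2]
    have hy : (0:ℝ) ≤ (((2:ℝ)^n)⁻¹)^c := Real.rpow_nonneg (by positivity) _
    have hx1 : (0:ℝ) < (2:ℝ)^c - 1 := by linarith
    calc (((2:ℝ)^c)^J - 1)/((2:ℝ)^c - 1) * (((2:ℝ)^n)⁻¹)^c
        ≤ ((2:ℝ)^c)^J/((2:ℝ)^c - 1) * (((2:ℝ)^n)⁻¹)^c := by
          apply mul_le_mul_of_nonneg_right _ hy
          apply div_le_div_of_nonneg_right (by linarith) hx1.le
      _ = ((2:ℝ)^c)^J * (((2:ℝ)^n)⁻¹)^c * (1/((2:ℝ)^c - 1)) := by ring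
  -- put everything together
  have hδ0 : (0:ℝ) < ((l:ℝ)-(k:ℝ))/2^n := div_pos (by linarith) h2n
  have hyδ : ((2:ℝ)^J/2^n) ≤ ((l:ℝ)-(k:ℝ))/2^n := by
    apply (div_le_div_iff_of_pos_right h2n).mpr
    have h1 : 2^J + k ≤ l := by omega
    have h2 : ((2^J + k : ℕ):ℝ) ≤ (l:ℝ) := by exact_mod_cast h1
    push_cast at h2
    linarith
  have hsum := key J le_rfl
  rw [Finset.sum_add_distrib, ← Finset.mul_sum, ← Finset.mul_sum] at hsum
  have hg2 := geom (2*α) (by linarith)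
  have hg1 := geom α hα1
  have hy2 : ((2:ℝ)^J/2^n)^(2*α) ≤ (((l:ℝ)-(k:ℝ))/2^n)^(2*α) :=
    Real.rpow_le_rpow (by positivity) hyδ (by linarith)
  have hy1 : ((2:ℝ)^J/2^n)^α ≤ (((l:ℝ)-(k:ℝ))/2^n)^α :=
    Real.rpow_le_rpow (by positivity) hyδ (le_of_lt hα1)
  have hδδ : (((l:ℝ)-(k:ℝ))/2^n)^α * (((l:ℝ)-(k:ℝ))/2^n)^α
      = (((l:ℝ)-(k:ℝ))/2^n)^(2*α) := by
    rw [← Real.rpow_add hδ0]; ring_nf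
  have ht0 : (0:ℝ) < (2:ℝ)^(-(2*α)) := Real.rpow_pos_of_pos two_pos _
  have ht1 : (2:ℝ)^(-(2*α)) < 1 :=
    Real.rpow_lt_one_of_one_lt_of_neg one_lt_two (by linarith)
  have hs0 : (0:ℝ) < (2:ℝ)^(-α) := Real.rpow_pos_of_pos two_pos _
  have hs1 : (2:ℝ)^(-α) < 1 :=
    Real.rpow_lt_one_of_one_lt_of_neg one_lt_two (by linarith)
  have h2s : (2:ℝ)^(1-α) = 2 * (2:ℝ)^(-α) := by
    rw [show (1:ℝ) - α = 1 + (-α) by ring, Real.rpow_add two_pos, Real.rpow_one]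
  set x1 := (((l:ℝ)-(k:ℝ))/2^n)^α with hx1def
  set x2 := (((l:ℝ)-(k:ℝ))/2^n)^(2*α) with hx2def
  set y1 := ((2:ℝ)^J/2^n)^α with hy1def
  set y2 := ((2:ℝ)^J/2^n)^(2*α) with hy2def
  set t := (2:ℝ)^(-(2*α)) with htdef
  set ss := (2:ℝ)^(-α) with hsdef
  have hx1nn : 0 ≤ x1 := Real.rpow_nonneg hδnn _
  have hy1nn : 0 ≤ y1 := Real.rpow_nonneg (by positivity) _
  have hy2nn : 0 ≤ y2 := Real.rpow_nonneg (by positivity) _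
  have h1t : (0:ℝ) < 1 - t := by linarith
  have h1s : (0:ℝ) < 1 - ss := by linarith
  have hP1 : KR * y2 + 2*KR * (y2 * (t/(1-t))) ≤ KR*2/(1-t) * x2 := by
    rw [div_mul_eq_mul_div, le_div_iff₀ h1t]
    have e : (KR * y2 + 2*KR*(y2*(t/(1-t)))) * (1-t) = KR*y2*(1-t) + 2*KR*y2*t := by
      field_simp
    rw [e]
    nlinarith [mul_nonneg hKR hy2nn, mul_nonneg hKR (sub_nonneg.mpr hy2)]
  have hP2 : 2*KZ^2*x1 * (y1 * (ss/(1-ss))) ≤ KZ^2 * (2*ss)/(1-ss) * x2 := by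
    rw [div_mul_eq_mul_div, le_div_iff₀ h1s]
    have e : (2*KZ^2*x1*(y1*(ss/(1-ss))))*(1-ss) = 2*KZ^2*x1*y1*ss := by
      field_simp
    rw [e]
    have hxy : x1 * y1 ≤ x2 := by
      nlinarith [mul_nonneg hx1nn (sub_nonneg.mpr hy1)]
    nlinarith [mul_nonneg (mul_nonneg (sq_nonneg KZ) hs0.le) (sub_nonneg.mpr hxy)]
  have b2 : (2*KR) * (∑ q ∈ Finset.range J, ((2:ℝ)^q/2^n)^(2*α)) ≤
      2*KR*(y2 * (t/(1-t))) := by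
    exact mul_le_mul_of_nonneg_left hg2 (by linarith)
  have b1 : (2*KZ^2*x1) * (∑ q ∈ Finset.range J, ((2:ℝ)^q/2^n)^α) ≤
      2*KZ^2*x1*(y1 * (ss/(1-ss))) := by
    apply mul_le_mul_of_nonneg_left hg1
    positivity
  calc |A i j ((k:ℝ)/2^n) ((l:ℝ)/2^n)| ≤ KR*2/(1-t) * x2 + KZ^2 * (2*ss)/(1-ss) * x2 := by
        linarith [hsum, hBJ, hP1, hP2, b1, b2]
    _ = (KR * 2 / (1 - (2:ℝ)^(-(2*α))) + KZ^2 * (2:ℝ)^(1-α) / (1 - (2:ℝ)^(-α))) *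
        (((l:ℝ) - (k:ℝ))/2^n)^(2*α) := by
      rw [h2s, ← htdef, ← hsdef, ← hx2def]
      ring
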